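/- In the instance D(G,≻,ε): let x be a symmetric data exchange, let e = {v¹,v²,v³} be a hyperedge with Δ := 1 − max(f⁺(e), f⁻(e)) > 0, let U consist of the edge agent e, the intermediate agent i_e, and the three vertex agents of e, and let x^U be the exchange over U which equals x_{s,t} + Δ on each of the coordinates (e,i_e), (i_e,e), (vᵗ,i_e), (i_e,vᵗ) for t ∈ {1,2,3} and equals 0 on all other coordinates. Then u_e(x^U) > u_e(x) and u_{i_e}(x^U) > u_{i_e}(x); in fact both utilities increase by exactly ε·Δ. -/
import Mathlib


open scoped BigOperators
open Classical

namespace DataExchangeHGM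

noncomputable section

/-- A data exchange on an arbitrary agent type: entries in `[0,1]`, zero diagonal. -/
def IsExch {A : Type*} (x : A → A → ℝ) : Prop :=
  (∀ a b, 0 ≤ x a b ∧ x a b ≤ 1) ∧ ∀ a, x a a = 0

/-- An exchange over the coalition `U`: zero outside `U × U`. -/
def IsExchOver {A : Type*} (U : Set A) (x : A → A → ℝ) : Prop :=
  IsExch x ∧ ∀ a b, (a ∉ U ∨ b ∉ U) → x a b = 0

/-- Core stability with respect to a utility function `u` (taking the whole exchange). -/
def CoreStable {A : Type*} (u : (A → A → ℝ) → A → ℝ) (x : A → A → ℝ) : Prop :=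
  ¬ ∃ (U : Set A) (y : A → A → ℝ), U.Nonempty ∧ IsExchOver U y ∧ ∀ a ∈ U, u x a < u y a

variable {V E : Type*}

/-- The agents of the instance `D(G,≻,ε)`: one edge agent and one intermediate agent per
hyperedge, and one vertex agent per vertex. -/
abbrev Agent (V E : Type*) := E ⊕ (E ⊕ V)

/-- The edge agent of hyperedge `e`. -/
def edgeA (e : E) : Agent V E := Sum.inl e

/-- The intermediate agent `i_e` of hyperedge `e`. -/
def interA (e : E) : Agent V E := Sum.inr (Sum.inl e)

/-- The vertex agent of vertex `v`. -/
def vertA (v : V) : Agent V E := Sum.inr (Sum.inr v)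

variable [Fintype E]

/-- `E(v)`: the hyperedges containing `v`, where `ends e : Fin 3 → V` lists the three
vertices of `e`. -/
def Ev (ends : E → Fin 3 → V) (v : V) : Finset E :=
  Finset.univ.filter (fun e => ∃ t, ends e t = v)

/-- The weight `w_v(e)`: `d+H+1`, `d+H`, or `H` according to the rank (0 = most preferred,
1 = second, 2 = least) of `e` in `v`'s preference order. -/
def weight (d H : ℝ) (rank : V → E → Fin 3) (v : V) (e : E) : ℝ :=
  if rank v e = 0 then d + H + 1 else if rank v e = 1 then d + H else H

/-- Utility of the edge agent `e`: payoff `x_{i_e,e}` minus cost `(1-ε)·x_{e,i_e}`. -/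
def uEdge (ε : ℝ) (x : Agent V E → Agent V E → ℝ) (e : E) : ℝ :=
  x (interA e) (edgeA e) - (1 - ε) * x (edgeA e) (interA e)

/-- Utility of the intermediate agent `i_e`. -/
def uInter (ε : ℝ) (ends : E → Fin 3 → V) (x : Agent V E → Agent V E → ℝ) (e : E) : ℝ :=
  min (x (edgeA e) (interA e))
      (min (x (vertA (ends e 0)) (interA e))
        (min (x (vertA (ends e 1)) (interA e)) (x (vertA (ends e 2)) (interA e))))
    - (1 - ε) *
      max (x (interA e) (edgeA e))
        (max (x (interA e) (vertA (ends e 0)))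
          (max (x (interA e) (vertA (ends e 1))) (x (interA e) (vertA (ends e 2)))))

/-- Utility of the vertex agent `v`. -/
def uVert (d H Γ : ℝ) (ends : E → Fin 3 → V) (rank : V → E → Fin 3)
    (x : Agent V E → Agent V E → ℝ) (v : V) : ℝ :=
  (∑ e ∈ Ev ends v, weight d H rank v e * x (interA e) (vertA v))
    - Γ * max ((∑ e ∈ Ev ends v, x (vertA v) (interA e)) - 1) 0

/-- The utility function of the instance `D(G,≻,ε)`. -/
def util (ε d H Γ : ℝ) (ends : E → Fin 3 → V) (rank : V → E → Fin 3)
    (x : Agent V E → Agent V E → ℝ) : Agent V E → ℝ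
  | Sum.inl e => uEdge ε x e
  | Sum.inr (Sum.inl e) => uInter ε ends x e
  | Sum.inr (Sum.inr v) => uVert d H Γ ends rank x v

/-- A symmetric exchange: for every hyperedge `e`, all shares from `i_e` to the edge agent
and the three vertex agents agree (their common value is `f⁻(e)`), and all shares towards
`i_e` agree (their common value is `f⁺(e)`). -/
def Symm (ends : E → Fin 3 → V) (x : Agent V E → Agent V E → ℝ) : Prop :=
  ∀ e : E, (∀ t : Fin 3, x (interA e) (vertA (ends e t)) = x (interA e) (edgeA e)) ∧
    (∀ t : Fin 3, x (vertA (ends e t)) (interA e) = x (edgeA e) (interA e))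

/-- `f⁻(e)`: the common outgoing share of `i_e` in a symmetric exchange. -/
def fminus (x : Agent V E → Agent V E → ℝ) (e : E) : ℝ := x (interA e) (edgeA e)

/-- `f⁺(e)`: the common incoming share of `i_e` in a symmetric exchange. -/
def fplus (x : Agent V E → Agent V E → ℝ) (e : E) : ℝ := x (edgeA e) (interA e)

/-- In `D(G,≻,ε)`, let `x` be a symmetric data exchange, let `e` be a
hyperedge with `Δ = 1 - max(f⁺(e), f⁻(e)) > 0`, and let `y` be the exchange over the
coalition `{e, i_e, v¹, v², v³}` that adds `Δ` to each pairwise share between `i_e` and the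
other coalition members and is zero elsewhere. Then the edge agent `e` and the intermediate
agent `i_e` are strictly better off in `y`; in fact both utilities increase by exactly `ε·Δ`. -/
theorem deviation_improves_edge_and_inter
    (V E : Type*) [Fintype V] [Fintype E]
    (ends : E → Fin 3 → V) (hends : ∀ e, Function.Injective (ends e))
    (hdeg : ∀ v, (Ev ends v).card ≤ 3)
    (rank : V → E → Fin 3)
    (hrank_inj : ∀ v, ∀ e ∈ Ev ends v, ∀ e' ∈ Ev ends v, rank v e = rank v e' → e = e')
    (hrank_seg : ∀ v, ∀ e ∈ Ev ends v, (rank v e : ℕ) < (Ev ends v).card)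
    (ε : ℝ) (hε0 : 0 < ε) (hε1 : ε < 1/1000)
    (x : Agent V E → Agent V E → ℝ) (hx : IsExch x) (hsymm : Symm ends x)
    (e : E) (Δ : ℝ) (hΔdef : Δ = 1 - max (fplus x e) (fminus x e)) (hΔpos : 0 < Δ)
    (y : Agent V E → Agent V E → ℝ)
    (hy : ∀ a b : Agent V E, y a b =
      if (a = edgeA e ∧ b = interA e) ∨ (a = interA e ∧ b = edgeA e) ∨
          (∃ t : Fin 3, a = vertA (ends e t) ∧ b = interA e) ∨
          (∃ t : Fin 3, a = interA e ∧ b = vertA (ends e t))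
        then x a b + Δ else 0) :
    uEdge ε y e = uEdge ε x e + ε * Δ ∧
    uInter ε ends y e = uInter ε ends x e + ε * Δ ∧
    uEdge ε x e < uEdge ε y e ∧
    uInter ε ends x e < uInter ε ends y e := by
  have hy1 : y (edgeA e) (interA e) = x (edgeA e) (interA e) + Δ := by
    rw [hy]; exact if_pos (Or.inl ⟨rfl, rfl⟩)
  have hy2 : y (interA e) (edgeA e) = x (interA e) (edgeA e) + Δ := by
    rw [hy]; exact if_pos (Or.inr (Or.inl ⟨rfl, rfl⟩))
  have hy3 : ∀ t : Fin 3, y (vertA (ends e t)) (interA e) = x (vertA (ends e t)) (interA e) + Δ := by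
    intro t; rw [hy]; exact if_pos (Or.inr (Or.inr (Or.inl ⟨t, rfl, rfl⟩)))
  have hy4 : ∀ t : Fin 3, y (interA e) (vertA (ends e t)) = x (interA e) (vertA (ends e t)) + Δ := by
    intro t; rw [hy]; exact if_pos (Or.inr (Or.inr (Or.inr ⟨t, rfl, rfl⟩)))
  have hs1 := (hsymm e).1
  have hs2 := (hsymm e).2
  have hEdge : uEdge ε y e = uEdge ε x e + ε * Δ := by
    unfold uEdge; rw [hy1, hy2]; ring
  have hInter : uInter ε ends y e = uInter ε ends x e + ε * Δ := by
    unfold uInter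
    rw [hy1, hy2, hy3 0, hy3 1, hy3 2, hy4 0, hy4 1, hy4 2,
        hs1 0, hs1 1, hs1 2, hs2 0, hs2 1, hs2 2]
    simp only [min_self, max_self]
    ring
  have hpos : 0 < ε * Δ := mul_pos hε0 hΔpos
  exact ⟨hEdge, hInter, by linarith, by linarith⟩

end
end DataExchangeHGM
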